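/- Let ρ₃ : G → ℂ* be projection to the third coordinate. Then the image of ρ₃ is exactly the group μ_{mr/gcd(m+s,r)} of (mr/gcd(m+s,r))-th roots of unity in ℂ*, and the kernel of ρ₃ has cardinality gcd(m+s,r). (This realizes (m₃, r₃) = (gcd(m+s,r), m·r/gcd(m+s,r)).) -/

import Mathlib

open Complex

/-- The homomorphism `φ : (ℂ*)³ → (ℂ*)³`, `φ(t₁,t₂,t₃) = (t₁^r, t₁^{-s} t₂^m, t₁t₂t₃)`. -/
noncomputable def phi (r m s : ℕ) : (ℂˣ × ℂˣ × ℂˣ) →* (ℂˣ × ℂˣ × ℂˣ) where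
  toFun t := (t.1 ^ r, t.1 ^ (-(s : ℤ)) * t.2.1 ^ m, t.1 * t.2.1 * t.2.2)
  map_one' := by simp
  map_mul' x y := by
    refine Prod.ext ?_ (Prod.ext ?_ ?_) <;> dsimp <;>
      simp [mul_pow, mul_zpow, mul_comm, mul_assoc, mul_left_comm]

/-- `exp z` as an element of `ℂˣ`. -/
noncomputable def unitExp (z : ℂ) : ℂˣ := Units.mk0 (Complex.exp z) (Complex.exp_ne_zero z)

/-- `η₁ = (e^{2πi/r}, e^{2πi s/(rm)}, e^{-2πi(m+s)/(rm)})`. -/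
noncomputable def eta1 (r m s : ℕ) : ℂˣ × ℂˣ × ℂˣ :=
  (unitExp (2 * (Real.pi : ℂ) * Complex.I / (r : ℂ)),
   unitExp (2 * (Real.pi : ℂ) * Complex.I * (s : ℂ) / ((r : ℂ) * (m : ℂ))),
   unitExp (-(2 * (Real.pi : ℂ) * Complex.I * ((m : ℂ) + (s : ℂ))) / ((r : ℂ) * (m : ℂ))))

/-- `η₂ = (1, e^{2πi/m}, e^{-2πi/m})`. -/
noncomputable def eta2 (m : ℕ) : ℂˣ × ℂˣ × ℂˣ :=
  (1,
   unitExp (2 * (Real.pi : ℂ) * Complex.I / (m : ℂ)),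
   unitExp (-(2 * (Real.pi : ℂ) * Complex.I) / (m : ℂ)))

/-- `ρ₁ : G → ℂ*`, projection of `G = ker φ` to the first coordinate. -/
noncomputable def rho1 (r m s : ℕ) : MonoidHom.ker (phi r m s) →* ℂˣ :=
  (MonoidHom.fst ℂˣ (ℂˣ × ℂˣ)).comp (MonoidHom.ker (phi r m s)).subtype

/-- `ρ₂ : G → ℂ*`, projection of `G = ker φ` to the second coordinate. -/
noncomputable def rho2 (r m s : ℕ) : MonoidHom.ker (phi r m s) →* ℂˣ :=
  ((MonoidHom.fst ℂˣ ℂˣ).comp (MonoidHom.snd ℂˣ (ℂˣ × ℂˣ))).comp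
    (MonoidHom.ker (phi r m s)).subtype

/-- `ρ₃ : G → ℂ*`, projection of `G = ker φ` to the third coordinate. -/
noncomputable def rho3 (r m s : ℕ) : MonoidHom.ker (phi r m s) →* ℂˣ :=
  ((MonoidHom.snd ℂˣ ℂˣ).comp (MonoidHom.snd ℂˣ (ℂˣ × ℂˣ))).comp
    (MonoidHom.ker (phi r m s)).subtype

/- ---------- auxiliary lemmas ---------- -/

lemma unitExp_mul (a b : ℂ) : unitExp a * unitExp b = unitExp (a + b) :=
  Units.ext (by simp [unitExp, Complex.exp_add])

lemma unitExp_pow (a : ℂ) (k : ℕ) : unitExp a ^ k = unitExp (k * a) :=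
  Units.ext (by simp [unitExp, ← Complex.exp_nat_mul])

lemma unitExp_inv (a : ℂ) : (unitExp a)⁻¹ = unitExp (-a) :=
  Units.ext (by simp [unitExp, Complex.exp_neg])

lemma unitExp_int_two_pi (k : ℤ) : unitExp ((k : ℂ) * (2 * (Real.pi : ℂ) * Complex.I)) = 1 :=
  Units.ext (by simp [unitExp, Complex.exp_int_mul_two_pi_mul_I])

lemma mem_ker_phi (r m s : ℕ) (t : ℂˣ × ℂˣ × ℂˣ) :
    t ∈ MonoidHom.ker (phi r m s) ↔
      t.1 ^ r = 1 ∧ t.2.1 ^ m = t.1 ^ s ∧ t.1 * t.2.1 * t.2.2 = 1 := by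
  rw [MonoidHom.mem_ker]
  show (t.1 ^ r, t.1 ^ (-(s : ℤ)) * t.2.1 ^ m, t.1 * t.2.1 * t.2.2) = 1 ↔ _
  rw [Prod.ext_iff, Prod.ext_iff]
  dsimp only
  simp only [Prod.fst_one, Prod.snd_one, zpow_neg, zpow_natCast, inv_mul_eq_one]
  exact and_congr_right fun _ => and_congr_left fun _ => eq_comm

/-- The image of `ρ₃ : G → ℂ*` is exactly `μ_{mr/gcd(m+s,r)}`, and the kernel of `ρ₃`
has cardinality `gcd(m+s,r)`. -/
theorem rho3_range_and_ker (r m s : ℕ) (hr : 1 ≤ r) (hm : 1 ≤ m) (hs : s ≤ r - 1) :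
    (rho3 r m s).range = rootsOfUnity (m * r / Nat.gcd (m + s) r) ℂ ∧
      Nat.card (MonoidHom.ker (rho3 r m s)) = Nat.gcd (m + s) r := by
  set d := Nat.gcd (m + s) r with hd_def
  have hr0 : r ≠ 0 := by omega
  have hm0 : m ≠ 0 := by omega
  have hd0 : d ≠ 0 := (Nat.gcd_pos_of_pos_right _ (by omega)).ne'
  have hdr : d ∣ r := Nat.gcd_dvd_right _ _
  have hdms : d ∣ m + s := Nat.gcd_dvd_left _ _
  set n := m * r / d with hn_def
  have hnd : n * d = m * r := Nat.div_mul_cancel (hdr.mul_left m)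
  have hn0 : n ≠ 0 := by
    intro h; rw [h, zero_mul] at hnd
    exact hm0 (by simpa [hr0] using hnd.symm)
  haveI : NeZero n := ⟨hn0⟩
  haveI : NeZero d := ⟨hd0⟩
  obtain ⟨k, hk⟩ := hdr
  obtain ⟨e, he⟩ := hdms
  have hnk : n = m * k := by
    rw [hn_def, hk, show m * (d * k) = d * (m * k) by ring, Nat.mul_div_cancel_left _ (by omega)]
  constructor
  · -- range computation
    set c2π : ℂ := 2 * (Real.pi : ℂ) * Complex.I with hc2π
    set ζ : ℂˣ := unitExp (c2π / (n : ℂ)) with hζdef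
    have hζ : IsPrimitiveRoot ζ n := IsPrimitiveRoot.coe_units_iff.mp (by
      simpa [hζdef, unitExp, hc2π, Units.val_mk0] using Complex.isPrimitiveRoot_exp n hn0)
    apply le_antisymm
    · rintro x ⟨t, rfl⟩
      obtain ⟨ha, hb, hc⟩ := (mem_ker_phi r m s t.1).mp t.2
      rw [_root_.mem_rootsOfUnity]
      show (t : ℂˣ × ℂˣ × ℂˣ).2.2 ^ n = 1
      have hcval : (t : ℂˣ × ℂˣ × ℂˣ).2.2 = ((t : ℂˣ × ℂˣ × ℂˣ).1 * (t : ℂˣ × ℂˣ × ℂˣ).2.1)⁻¹ :=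
        eq_inv_of_mul_eq_one_right hc
      rw [hcval, inv_pow, inv_eq_one, mul_pow, hnk]
      have h1 : (t : ℂˣ × ℂˣ × ℂˣ).2.1 ^ (m * k) = (t : ℂˣ × ℂˣ × ℂˣ).1 ^ (s * k) := by
        rw [pow_mul, hb, ← pow_mul]
      rw [h1, ← pow_add]
      have h2 : m * k + s * k = r * e := by rw [← add_mul, he, hk]; ring
      rw [h2, pow_mul, ha, one_pow]
    · rw [← hζ.zpowers_eq, Subgroup.zpowers_le]
      have hrC : (r : ℂ) ≠ 0 := Nat.cast_ne_zero.mpr hr0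
      have hmC : (m : ℂ) ≠ 0 := Nat.cast_ne_zero.mpr hm0
      have hnC : (n : ℂ) ≠ 0 := Nat.cast_ne_zero.mpr hn0
      set u : ℤ := Nat.gcdA (m + s) r with hu
      set v : ℤ := Nat.gcdB (m + s) r with hv
      have hbez : (d : ℤ) = (m + s) * u + r * v := Nat.gcd_eq_gcd_ab _ _
      set a1 : ℂ := (u : ℂ) * c2π / (r : ℂ) with ha1
      set a2 : ℂ := ((u * s + v * r : ℤ) : ℂ) * c2π / ((r : ℂ) * (m : ℂ)) with ha2
      have hmem : ζ⁻¹ ∈ (rho3 r m s).range := by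
        have hmemker : (unitExp a1, unitExp a2, (unitExp a1 * unitExp a2)⁻¹) ∈
            MonoidHom.ker (phi r m s) := by
          rw [mem_ker_phi]
          refine ⟨?_, ?_, mul_inv_cancel _⟩
          · rw [unitExp_pow]
            have h : (r : ℂ) * a1 = (u : ℂ) * c2π := by rw [ha1]; field_simp
            rw [h]
            exact unitExp_int_two_pi u
          · rw [unitExp_pow, unitExp_pow]
            have h : (m : ℂ) * a2 = (v : ℂ) * c2π + (s : ℂ) * a1 := by
              rw [ha1, ha2]; push_cast; field_simp; ring
            rw [h, ← unitExp_mul, unitExp_int_two_pi, one_mul]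
        refine ⟨⟨_, hmemker⟩, ?_⟩
        show (unitExp a1 * unitExp a2)⁻¹ = ζ⁻¹
        have key : a1 + a2 = c2π / (n : ℂ) := by
          have hndC : (n : ℂ) * (d : ℂ) = (m : ℂ) * (r : ℂ) := by exact_mod_cast hnd
          have hbezC : (d : ℂ) = ((m : ℂ) + (s : ℂ)) * (u : ℂ) + (r : ℂ) * (v : ℂ) := by
            exact_mod_cast hbez
          rw [ha1, ha2, div_add_div _ _ hrC (mul_ne_zero hrC hmC),
            div_eq_div_iff (mul_ne_zero hrC (mul_ne_zero hrC hmC)) hnC]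
          push_cast
          linear_combination (c2π * (r : ℂ)) * hndC + (-(n : ℂ) * (r : ℂ) * c2π) * hbezC
        rw [unitExp_mul, key, hζdef]
      simpa using inv_mem hmem
  · -- kernel cardinality
    have hequiv : MonoidHom.ker (rho3 r m s) ≃ rootsOfUnity d ℂ := by
      refine ⟨fun t => ⟨((t.1 : ℂˣ × ℂˣ × ℂˣ)).1, ?_⟩,
        fun z => ⟨⟨(z.1, z.1⁻¹, 1), ?_⟩, ?_⟩, ?_, ?_⟩
      · obtain ⟨ha, hb, hc⟩ := (mem_ker_phi r m s t.1.1).mp t.1.2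
        have hc1 : ((t.1 : ℂˣ × ℂˣ × ℂˣ)).2.2 = 1 := t.2
        rw [hc1, mul_one] at hc
        have hms : ((t.1 : ℂˣ × ℂˣ × ℂˣ)).1 ^ (m + s) = 1 := by
          rw [pow_add, ← hb, ← mul_pow, hc, one_pow]
        rw [_root_.mem_rootsOfUnity]
        exact orderOf_dvd_iff_pow_eq_one.mp
          (Nat.dvd_gcd (orderOf_dvd_of_pow_eq_one hms) (orderOf_dvd_of_pow_eq_one ha))
      · have hz : z.1 ^ d = 1 := (_root_.mem_rootsOfUnity d z.1).mp z.2
        refine (mem_ker_phi r m s _).mpr ⟨?_, ?_, by simp⟩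
        · rw [hk, pow_mul, hz, one_pow]
        · rw [inv_pow, inv_eq_iff_mul_eq_one, ← pow_add, he, pow_mul, hz, one_pow]
      · rfl
      · intro t
        obtain ⟨ha, hb, hc⟩ := (mem_ker_phi r m s t.1.1).mp t.1.2
        have hc1 : ((t.1 : ℂˣ × ℂˣ × ℂˣ)).2.2 = 1 := t.2
        rw [hc1, mul_one] at hc
        apply Subtype.ext
        apply Subtype.ext
        exact Prod.ext rfl (Prod.ext (inv_eq_of_mul_eq_one_right hc) hc1.symm)
      · intro z
        exact Subtype.ext rfl
    rw [Nat.card_congr hequiv, Complex.card_rootsOfUnity d]
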